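/- For every n, q, and radius 0 ≤ r ≤ n, and every center S ∈ S_{n,q}, the radius-r deletion ball satisfies |B_r(S)| ≥ binomial(r+q-1, q-1); that is, extreme centers minimize the deletion ball size. -/

import Mathlib

def simplex (n q : ℕ) : Finset (Fin q → ℕ) := Finset.Nat.antidiagonalTuple q n

def delDist {q : ℕ} (x y : Fin q → ℕ) : ℕ := ∑ i, (x i - y i)

def ball (n q r : ℕ) (x : Fin q → ℕ) : Finset (Fin q → ℕ) :=
  (simplex n q).filter (fun y => delDist x y ≤ r)

lemma exists_le_sum_eq : ∀ (q : ℕ) (x : Fin q → ℕ) (r : ℕ), r ≤ ∑ i, x i →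
    ∃ d : Fin q → ℕ, (∀ i, d i ≤ x i) ∧ ∑ i, d i = r := by
  intro q
  induction q with
  | zero =>
    intro x r hr
    simp at hr
    exact ⟨0, fun i => i.elim0, by simp [hr]⟩
  | succ q ih =>
    intro x r hr
    rw [Fin.sum_univ_succ] at hr
    by_cases h : r ≤ x 0
    · exact ⟨Fin.cons r 0, by
        intro i
        refine Fin.cases ?_ ?_ i <;> simp [h], by simp [Fin.sum_univ_succ]⟩
    · push_neg at h
      obtain ⟨d, hd, hds⟩ := ih (fun i => x i.succ) (r - x 0) (by show r - x 0 ≤ ∑ i : Fin q, x i.succ; omega)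
      refine ⟨Fin.cons (x 0) d, ?_, ?_⟩
      · intro i
        refine Fin.cases ?_ ?_ i <;> simp [hd]
      · rw [Fin.sum_univ_succ]
        simp only [Fin.cons_zero, Fin.cons_succ]
        omega

lemma card_simplex (r q : ℕ) (hq : 1 ≤ q) :
    (simplex r q).card = (r + q - 1).choose (q - 1) := by
  have h1 : simplex r q = Finset.piAntidiag (Finset.univ : Finset (Fin q)) r := by
    rw [simplex, Finset.piAntidiag_univ_fin_eq_antidiagonalTuple]
  rw [h1, ← Finset.map_sym_eq_piAntidiag, Finset.card_map, Finset.sym_univ,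
    ← Fintype.card_coe, Fintype.card_coe]
  have := Sym.card_sym_eq_choose (α := Fin q) r
  rw [Finset.card_univ, this, Fintype.card_fin]
  have hq1 : q + r - 1 = (q - 1) + r := by omega
  have hq2 : r + q - 1 = r + (q - 1) := by omega
  rw [hq1, hq2, Nat.add_comm (q-1) r, Nat.choose_symm_add]

/-- Extreme centers minimize deletion balls: every radius-`r` ball in `S_{n,q}`
has size at least `binomial (r+q-1) (q-1)`. -/
theorem ball_card_ge_extreme (n q r : ℕ) (hq : 1 ≤ q) (hr : r ≤ n)
    (x : Fin q → ℕ) (hx : x ∈ simplex n q) :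
    (r + q - 1).choose (q - 1) ≤ (ball n q r x).card := by
  have hxn : ∑ i, x i = n := Finset.Nat.mem_antidiagonalTuple.mp hx
  obtain ⟨d, hd, hds⟩ := exists_le_sum_eq q x r (by omega)
  rw [← card_simplex r q hq]
  apply Finset.card_le_card_of_injOn (fun z i => (x i - d i) + z i)
  · intro z hz
    have hzs : ∑ i, z i = r := Finset.Nat.mem_antidiagonalTuple.mp hz
    rw [ball, Finset.mem_coe, Finset.mem_filter]
    constructor
    · rw [simplex, Finset.Nat.mem_antidiagonalTuple]
      rw [Finset.sum_add_distrib, hzs,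
        Finset.sum_tsub_distrib Finset.univ (fun i _ => hd i), hxn, hds]
      omega
    · rw [delDist]
      calc ∑ i, (x i - ((x i - d i) + z i)) ≤ ∑ i, d i := by
            apply Finset.sum_le_sum
            intro i _
            omega
        _ = r := hds
  · intro z1 _ z2 _ h
    funext i
    have := congrFun h i
    simp only at this
    omega
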